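/- Let p be prime, k a positive integer, and a_1, ..., a_l elements of a field extension of F_p. Set D = p^{⌊log_p(k)⌋+1}. Define Λ^{(p)}_{a_1,...,a_l}(k, m_1, ..., m_l) = Λ_{a_1,...,a_l}(k, m_1^+, ..., m_l^+) mod p, where m^+ = m if m > 0 and m^+ = m + (⌊−m/D⌋ + 1)·D if m ≤ 0. Then Λ^{(p)}_{a_1,...,a_l}(k, m_1, ..., m_l) is periodic in each of the variables m_1, ..., m_l with period D; that is, Λ^{(p)}_{a_1,...,a_l}(k, m_1, ..., m_j + D, ..., m_l) = Λ^{(p)}_{a_1,...,a_l}(k, m_1, ..., m_j, ..., m_l) for each j = 1, ..., l and all integers m_1, ..., m_l. -/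

import Mathlib

noncomputable section

/-- `Lam l a m k` is the quantity `Λ_{a_1,…,a_l}(k, m_1,…,m_l)`. -/
def Lam {R : Type*} [CommRing R] : (l : ℕ) → (Fin l → R) → (Fin l → ℕ) → ℤ → R
  | 0, _, _, k => if k = 0 then 1 else 0
  | l + 1, a, m, k =>
      ∑ j ∈ Finset.range (m (Fin.last l) + 1),
        (Nat.choose (m (Fin.last l)) j : R) * a (Fin.last l) ^ j *
          Lam l (fun i => a i.castSucc) (fun i => m i.castSucc) (k - j)

def mplus (D : ℕ) (m : ℤ) : ℤ := if 0 < m then m else m + ((-m) / (D : ℤ) + 1) * D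

lemma Lam_neg {R : Type*} [CommRing R] : ∀ (l : ℕ) (a : Fin l → R) (m : Fin l → ℕ)
    (k : ℤ), k < 0 → Lam l a m k = 0 := by
  intro l
  induction l with
  | zero => intro a m k hk; simp [Lam, hk.ne]
  | succ l ih =>
    intro a m k hk
    rw [Lam]
    apply Finset.sum_eq_zero
    intro j _
    rw [ih _ _ _ (by omega), mul_zero]

lemma choose_add_pow_cast {p : ℕ} [Fact p.Prime] {K : Type*} [Field K] [CharP K p]
    (s j m : ℕ) (hj : j < p ^ s) :
    (((m + p ^ s).choose j : ℕ) : K) = ((m.choose j : ℕ) : K) := by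
  rw [Nat.add_choose_eq, Nat.cast_sum]
  rw [Finset.sum_eq_single (j, 0)]
  · simp
  · rintro ⟨x, y⟩ hxy hne
    rw [Finset.HasAntidiagonal.mem_antidiagonal] at hxy
    have hy : y ≠ 0 := by rintro rfl; exact hne (by simp [← hxy])
    have hyp : y ≠ p ^ s := by omega
    have : (p : K) ∣ ((p ^ s).choose y : K) := by
      obtain ⟨c, hc⟩ := Nat.Prime.dvd_choose_pow (Fact.out : p.Prime) hy hyp
      exact ⟨(c : K), by exact_mod_cast congrArg (Nat.cast : ℕ → K) hc⟩
    obtain ⟨c, hc⟩ := this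
    have h0 : (((p ^ s).choose y : ℕ) : K) = 0 := by
      rw [hc, CharP.cast_eq_zero K p, zero_mul]
    rw [Nat.cast_mul, h0, mul_zero]
  · intro h; exact absurd (Finset.HasAntidiagonal.mem_antidiagonal.2 (by simp)) h

lemma choose_mod_cast {p : ℕ} [Fact p.Prime] {K : Type*} [Field K] [CharP K p]
    (s j : ℕ) (hj : j < p ^ s) {m m' : ℕ} (h : m % p ^ s = m' % p ^ s) :
    ((m.choose j : ℕ) : K) = ((m'.choose j : ℕ) : K) := by
  have key : ∀ (q r : ℕ), (((r + q * p ^ s).choose j : ℕ) : K) = ((r.choose j : ℕ) : K) := by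
    intro q
    induction q with
    | zero => simp
    | succ q ih =>
      intro r
      have : r + (q + 1) * p ^ s = (r + q * p ^ s) + p ^ s := by ring
      rw [this, choose_add_pow_cast s j _ hj, ih]
  have h1 : m = m % p ^ s + (m / p ^ s) * p ^ s := by
    rw [Nat.mod_add_div']
  have h2 : m' = m' % p ^ s + (m' / p ^ s) * p ^ s := by
    rw [Nat.mod_add_div']
  rw [h1, h2, key, key, h]

lemma Lam_congr {p : ℕ} [Fact p.Prime] {K : Type*} [Field K] [CharP K p] (s : ℕ) :
    ∀ (l : ℕ) (a : Fin l → K) (m m' : Fin l → ℕ),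
      (∀ i, m i % p ^ s = m' i % p ^ s) → ∀ k : ℤ, k < (p : ℤ) ^ s →
      Lam l a m k = Lam l a m' k := by
  intro l
  induction l with
  | zero => intro a m m' _ k _; rfl
  | succ l ih =>
    intro a m m' hmm k hk
    rw [Lam, Lam]
    set N := max (m (Fin.last l)) (m' (Fin.last l)) with hN
    have ext : ∀ (mm : Fin (l+1) → ℕ),
        ∑ j ∈ Finset.range (mm (Fin.last l) + 1),
          (Nat.choose (mm (Fin.last l)) j : K) * a (Fin.last l) ^ j *
            Lam l (fun i => a i.castSucc) (fun i => mm i.castSucc) (k - j)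
        = ∑ j ∈ Finset.range (N + 1),
          (Nat.choose (mm (Fin.last l)) j : K) * a (Fin.last l) ^ j *
            Lam l (fun i => a i.castSucc) (fun i => mm i.castSucc) (k - j) ∨
        ¬ (mm (Fin.last l) ≤ N) := by
      intro mm
      by_cases hle : mm (Fin.last l) ≤ N
      · left
        apply Finset.sum_subset
        · intro x hx
          rw [Finset.mem_range] at hx ⊢; omega
        · intro x _ hx
          rw [Finset.mem_range, not_lt] at hx
          rw [Nat.choose_eq_zero_of_lt (by omega)]
          simp
      · right; exact hle
    have h1 := (ext m).resolve_right (by simp [hN])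
    have h2 := (ext m').resolve_right (by simp [hN])
    rw [h1, h2]
    apply Finset.sum_congr rfl
    intro j _
    by_cases hkj : k - (j : ℤ) < 0
    · rw [Lam_neg _ _ _ _ hkj, Lam_neg _ _ _ _ hkj, mul_zero, mul_zero]
    · have hjk : (j : ℤ) ≤ k := by omega
      have hjs : j < p ^ s := by
        have : (j : ℤ) < (p : ℤ) ^ s := lt_of_le_of_lt hjk hk
        exact_mod_cast this
      rw [choose_mod_cast s j hjs (hmm (Fin.last l)),
        ih _ (fun i => m i.castSucc) (fun i => m' i.castSucc)
          (fun i => hmm i.castSucc) (k - j) (by omega)]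

lemma mplus_nonneg {D : ℕ} (hD : 0 < D) (x : ℤ) : 0 ≤ mplus D x := by
  unfold mplus
  split
  · omega
  · have h1 : (0 : ℤ) < D := by exact_mod_cast hD
    have := Int.emod_emod_of_dvd x (dvd_refl (D : ℤ))
    have hmod := Int.mul_ediv_add_emod (-x) (D : ℤ)
    have hlt := Int.emod_lt_of_pos (-x) h1
    have hge := Int.emod_nonneg (-x) h1.ne'
    nlinarith [Int.mul_ediv_add_emod (-x) (D : ℤ)]

lemma mplus_emod (D : ℕ) (x : ℤ) : mplus D x % (D : ℤ) = x % (D : ℤ) := by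
  unfold mplus
  split
  · rfl
  · rw [Int.add_mul_emod_self_right]

/-- Periodicity of `Λ^{(p)}`: in a field extension of `F_p`, the function
`Λ^{(p)}_{a_1,…,a_l}(k, m_1, …, m_l) = Λ_{a_1,…,a_l}(k, m_1⁺, …, m_l⁺)` is periodic in each of
the variables `m_1, …, m_l` with period `D = p^{⌊log_p k⌋ + 1}` (in characteristic `p`,
reduction mod `p` is automatic). -/
theorem stmt12 (p : ℕ) [Fact p.Prime] (K : Type*) [Field K] [CharP K p]
    (l : ℕ) (a : Fin l → K) (k : ℕ) (hk : 0 < k)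
    (D : ℕ) (hD : D = p ^ (Nat.log p k + 1))
    (m : Fin l → ℤ) (j : Fin l) :
    Lam l a (fun i => (mplus D (Function.update m j (m j + D) i)).toNat) (k : ℤ)
      = Lam l a (fun i => (mplus D (m i)).toNat) (k : ℤ) := by
  have hp : p.Prime := Fact.out
  have hD0 : 0 < D := by rw [hD]; exact pow_pos hp.pos _
  set s := Nat.log p k + 1 with hs
  have hkD : (k : ℤ) < (p : ℤ) ^ s := by
    exact_mod_cast Nat.lt_pow_succ_log_self hp.one_lt k
  apply Lam_congr s l a _ _ _ _ hkD
  intro i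
  rw [← hD]
  have key : ∀ x y : ℤ, x % (D : ℤ) = y % (D : ℤ) →
      (mplus D x).toNat % D = (mplus D y).toNat % D := by
    intro x y hxy
    have hx := mplus_nonneg hD0 x
    have hy := mplus_nonneg hD0 y
    have : ((mplus D x).toNat % D : ℤ) = ((mplus D y).toNat % D : ℤ) := by
      push_cast
      rw [Int.toNat_of_nonneg hx, Int.toNat_of_nonneg hy, mplus_emod, mplus_emod, hxy]
    exact_mod_cast this
  by_cases hij : i = j
  · subst hij
    rw [Function.update_self]
    apply key
    conv_lhs => rw [show m i + (D : ℤ) = m i + 1 * D by ring]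
    rw [Int.add_mul_emod_self_right]
  · rw [Function.update_of_ne hij]
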